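/- Let A ⊆ ℤ⁺ be an infinite set with weak apartness and let Ã : ℕ³ → {0,1} satisfy lim_k lim_s Ã(x,k,s) = χ_A(x) for every x. Define, for n ∈ ℕ and positive integers w, R(n,w) = min({x ∈ B^n : Ã(x, λ(w), μ(w)) = 1} ∪ {2^{n+1} − 1}). Then there exist x, w₁, w₂ ∈ A with x ≪ w₁ ≪ w₂ and R(μ(x), w₁ + w₂) = x. -/

import Mathlib

/-- `mu x = ⌊log₂ x⌋`, the exponent of the highest power of 2 in the binary expansion of `x`. -/
def mu (x : ℕ) : ℕ := Nat.log 2 x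

/-- `lam x` is the 2-adic valuation of `x`, the exponent of the lowest power of 2
in the binary expansion of `x`. -/
def lam (x : ℕ) : ℕ := padicValNat 2 x

/-- `Bset n = B^n = {x ∈ ℤ⁺ : μ(x) = n}`. -/
def Bset (n : ℕ) : Set ℕ := {x | 0 < x ∧ mu x = n}

/-- A set `A ⊆ ℤ⁺` has weak apartness if every `A ∩ B^m` has at most one element and
for every `l` there are at most two elements `x ∈ A` with `λ(x) = l`. -/
def WeakApart (A : Set ℕ) : Prop :=
  (∀ m, (A ∩ Bset m).Subsingleton) ∧
  (∀ l, ∀ x ∈ A, ∀ y ∈ A, ∀ z ∈ A,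
    lam x = l → lam y = l → lam z = l → x = y ∨ x = z ∨ y = z)

/-- `FS A`: all finite sums of distinct elements of `A`. -/
def FS (A : Set ℕ) : Set ℕ :=
  {n | ∃ F : Finset ℕ, ↑F ⊆ A ∧ F.Nonempty ∧ F.sum id = n}

/-- `FSle k A = FS^{≤k}(A)`: sums of at most `k` distinct elements of `A`. -/
def FSle (k : ℕ) (A : Set ℕ) : Set ℕ :=
  {n | ∃ F : Finset ℕ, ↑F ⊆ A ∧ F.Nonempty ∧ F.card ≤ k ∧ F.sum id = n}

/-- `A` is `Π⁰₃`: `x ∈ A ↔ ∀ y ∃ z ∀ w, R x y z w` for a computable relation `R`. -/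
def Pi03 (A : Set ℕ) : Prop :=
  ∃ R : ℕ → ℕ → ℕ → ℕ → Bool,
    Computable (fun p : ℕ × ℕ × ℕ × ℕ => R p.1 p.2.1 p.2.2.1 p.2.2.2) ∧
    ∀ x, x ∈ A ↔ ∀ y, ∃ z, ∀ w, R x y z w = true

/-- `A` is `Σ⁰₃`: `x ∈ A ↔ ∃ y ∀ z ∃ w, R x y z w` for a computable relation `R`. -/
def Sigma03 (A : Set ℕ) : Prop :=
  ∃ R : ℕ → ℕ → ℕ → ℕ → Bool,
    Computable (fun p : ℕ × ℕ × ℕ × ℕ => R p.1 p.2.1 p.2.2.1 p.2.2.2) ∧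
    ∀ x, x ∈ A ↔ ∃ y, ∀ z, ∃ w, R x y z w = true

/-- `A` is `Δ⁰₃` iff it is both `Σ⁰₃` and `Π⁰₃`. -/
def Delta03 (A : Set ℕ) : Prop := Sigma03 A ∧ Pi03 A


lemma lam_helpers_fact : Fact (Nat.Prime 2) := ⟨Nat.prime_two⟩

lemma two_pow_lam_dvd (x : ℕ) : 2 ^ lam x ∣ x := pow_padicValNat_dvd

lemma lam_le_mu {x : ℕ} (hx : 0 < x) : lam x ≤ mu x := by
  have h : 2 ^ lam x ≤ x := Nat.le_of_dvd hx (two_pow_lam_dvd x)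
  exact (Nat.le_log_iff_pow_le one_lt_two hx.ne').mpr h

lemma mu_add {a b : ℕ} (ha : 0 < a) (hb : 0 < b) (h : mu a < lam b) :
    mu (a + b) = mu b := by
  have h1 : 2 ^ mu b ≤ a + b :=
    le_trans (Nat.pow_log_le_self 2 hb.ne') (Nat.le_add_left b a)
  have hd : 2 ^ lam b ∣ b := two_pow_lam_dvd b
  obtain ⟨c, hc⟩ := hd
  have hd2 : 2 ^ lam b ∣ 2 ^ (mu b + 1) :=
    pow_dvd_pow 2 (le_trans (lam_le_mu hb) (Nat.le_succ _))
  obtain ⟨e, he⟩ := hd2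
  have hblt : b < 2 ^ (mu b + 1) := Nat.lt_pow_succ_log_self one_lt_two b
  have hce : c < e := by
    by_contra hh
    push_neg at hh
    have : 2 ^ (mu b + 1) ≤ b := by
      calc 2 ^ (mu b + 1) = 2 ^ lam b * e := he
      _ ≤ 2 ^ lam b * c := Nat.mul_le_mul_left _ hh
      _ = b := hc.symm
    omega
  have halt : a < 2 ^ lam b :=
    lt_of_lt_of_le (Nat.lt_pow_succ_log_self one_lt_two a) (Nat.pow_le_pow_right (by norm_num) h)
  have h2 : a + b < 2 ^ (mu b + 1) := by
    have : 2 ^ lam b * (c + 1) ≤ 2 ^ lam b * e := Nat.mul_le_mul_left _ hce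
    calc a + b < 2 ^ lam b + 2 ^ lam b * c := by omega
    _ = 2 ^ lam b * (c + 1) := by ring
    _ ≤ 2 ^ lam b * e := this
    _ = 2 ^ (mu b + 1) := he.symm
  exact Nat.log_eq_of_pow_le_of_lt_pow h1 h2

lemma lam_add {a b : ℕ} (ha : 0 < a) (hb : 0 < b) (h : lam a < lam b) :
    lam (a + b) = lam a := by
  haveI : Fact (Nat.Prime 2) := ⟨Nat.prime_two⟩
  have hab : a + b ≠ 0 := by omega
  have hdvd : 2 ^ lam a ∣ a + b :=
    dvd_add (two_pow_lam_dvd a) (dvd_trans (pow_dvd_pow 2 h.le) (two_pow_lam_dvd b))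
  have hndvd : ¬ 2 ^ (lam a + 1) ∣ a + b := by
    intro hdd
    have hb' : 2 ^ (lam a + 1) ∣ b := dvd_trans (pow_dvd_pow 2 h) (two_pow_lam_dvd b)
    have : 2 ^ (lam a + 1) ∣ a := (Nat.dvd_add_right hb').mp (by rwa [Nat.add_comm a b] at hdd)
    exact pow_succ_padicValNat_not_dvd ha.ne' this
  have h1 : lam a ≤ lam (a + b) := (padicValNat_dvd_iff_le hab).mp hdvd
  have h2 : lam (a + b) ≤ lam a := by
    by_contra hh
    push_neg at hh
    exact hndvd ((padicValNat_dvd_iff_le hab).mpr hh)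
  omega

lemma finite_of_two (S : Set ℕ)
    (h : ∀ x ∈ S, ∀ y ∈ S, ∀ z ∈ S, x = y ∨ x = z ∨ y = z) : S.Finite := by
  by_cases h2 : ∃ a ∈ S, ∃ b ∈ S, a ≠ b
  · obtain ⟨a, ha, b, hb, hab⟩ := h2
    apply Set.Finite.subset ((Set.finite_singleton b).insert a)
    intro c hc
    rcases h a ha b hb c hc with h' | h' | h'
    · exact absurd h' hab
    · exact Or.inl h'.symm
    · exact Or.inr h'.symm
  · push_neg at h2
    exact Set.Subsingleton.finite fun p hp q hq => by
      by_contra hne; exact hne (h2 p hp q hq)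

lemma exists_lam_gt (A : Set ℕ) (hinf : A.Infinite) (hwa : WeakApart A) (N : ℕ) :
    ∃ w ∈ A, N < lam w := by
  by_contra h
  push_neg at h
  apply hinf
  have hsub : A ⊆ ⋃ l ∈ Set.Iic N, {x ∈ A | lam x = l} := fun x hx =>
    Set.mem_biUnion (h x hx) ⟨hx, rfl⟩
  refine Set.Finite.subset (Set.Finite.biUnion (Set.finite_Iic N) fun l _ => ?_) hsub
  exact finite_of_two _ fun p hp q hq r hr =>
    hwa.2 l p hp.1 q hq.1 r hr.1 hp.2 hq.2 hr.2

theorem stmt2 (A : Set ℕ) (hpos : ∀ x ∈ A, 0 < x) (hinf : A.Infinite)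
    (hwa : WeakApart A)
    (tA : ℕ → ℕ → ℕ → ℕ) (htA01 : ∀ x k s, tA x k s ≤ 1)
    (hlim : ∀ x, ∃ K, ∀ k > K, ∃ S, ∀ s > S, tA x k s = A.indicator (fun _ => 1) x)
    (R : ℕ → ℕ → ℕ)
    (hR : ∀ n w, R n w =
      sInf ({x | x ∈ Bset n ∧ tA x (lam w) (mu w) = 1} ∪ {2 ^ (n + 1) - 1})) :
    ∃ x ∈ A, ∃ w₁ ∈ A, ∃ w₂ ∈ A,
      mu x < lam w₁ ∧ mu w₁ < lam w₂ ∧ R (mu x) (w₁ + w₂) = x := by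
  
  haveI : Fact (Nat.Prime 2) := ⟨Nat.prime_two⟩
  obtain ⟨x, hxA⟩ := hinf.nonempty
  have hx0 : 0 < x := hpos x hxA
  choose K hK using hlim
  set Km := (Finset.range (x + 1)).sup K with hKm
  obtain ⟨w₁, hw₁A, hw₁⟩ := exists_lam_gt A hinf hwa (max (mu x) Km)
  have hw₁0 : 0 < w₁ := hpos w₁ hw₁A
  have hmuxlt : mu x < lam w₁ := lt_of_le_of_lt (le_max_left _ _) hw₁
  have hk1 : ∀ y ≤ x, K y < lam w₁ := fun y hy =>
    lt_of_le_of_lt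
      (le_trans (Finset.le_sup (Finset.mem_range.mpr (Nat.lt_succ_of_le hy)))
        (le_max_right (mu x) Km)) hw₁
  choose S hS using fun y : Fin (x + 1) => hK y.1 (lam w₁) (hk1 y.1 (Nat.lt_succ_iff.mp y.2))
  set Sm := (Finset.univ : Finset (Fin (x + 1))).sup S with hSm
  obtain ⟨w₂, hw₂A, hw₂⟩ := exists_lam_gt A hinf hwa (max (mu w₁) Sm)
  have hw₂0 : 0 < w₂ := hpos w₂ hw₂A
  have hmuw₁lt : mu w₁ < lam w₂ := lt_of_le_of_lt (le_max_left _ _) hw₂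
  have hlamlt : lam w₁ < lam w₂ := lt_of_le_of_lt (lam_le_mu hw₁0) hmuw₁lt
  have hSmlt : Sm < mu w₂ :=
    lt_of_lt_of_le (lt_of_le_of_lt (le_max_right (mu w₁) Sm) hw₂) (lam_le_mu hw₂0)
  have hmusum : mu (w₁ + w₂) = mu w₂ := mu_add hw₁0 hw₂0 hmuw₁lt
  have hlamsum : lam (w₁ + w₂) = lam w₁ := lam_add hw₁0 hw₂0 hlamlt
  have htA : ∀ y ≤ x, tA y (lam w₁) (mu w₂) = A.indicator (fun _ => 1) y := by
    intro y hy
    have hfin : y < x + 1 := Nat.lt_succ_of_le hy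
    exact hS ⟨y, hfin⟩ (mu w₂)
      (lt_of_le_of_lt (Finset.le_sup (Finset.mem_univ (⟨y, hfin⟩ : Fin (x + 1)))) hSmlt)
  have htAx : tA x (lam w₁) (mu w₂) = 1 := by
    rw [htA x le_rfl, Set.indicator_of_mem hxA]
  refine ⟨x, hxA, w₁, hw₁A, w₂, hw₂A, hmuxlt, hmuw₁lt, ?_⟩
  rw [hR, hlamsum, hmusum]
  set T : Set ℕ := {y | y ∈ Bset (mu x) ∧ tA y (lam w₁) (mu w₂) = 1} ∪ {2 ^ (mu x + 1) - 1}
    with hT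
  have hxT : x ∈ T := Or.inl ⟨⟨hx0, rfl⟩, htAx⟩
  have hxle : ∀ y ∈ T, x ≤ y := by
    intro y hy
    rcases hy with ⟨⟨hy0, hymu⟩, hytA⟩ | hy
    · by_contra hlt
      push_neg at hlt
      have hyA : y ∉ A := by
        intro hyA
        have := hwa.1 (mu x) ⟨hyA, hy0, hymu⟩ ⟨hxA, hx0, rfl⟩
        omega
      have : tA y (lam w₁) (mu w₂) = 0 := by
        rw [htA y hlt.le, Set.indicator_of_notMem hyA]
      omega
    · have hxlt : x < 2 ^ (mu x + 1) := Nat.lt_pow_succ_log_self one_lt_two x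
      have : y = 2 ^ (mu x + 1) - 1 := hy
      omega
  exact le_antisymm (Nat.sInf_le hxT) (hxle _ (Nat.sInf_mem ⟨x, hxT⟩))
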